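/- Define S, T : ℝ₊² → ℝ₊² by S(α, β) = (1/α, 1/β) and T(α, β) = ((αβ+α+1)/β, αβ+α). Then S² = id and (S∘T)³ = id. -/

import Mathlib

noncomputable def S₀₄ : ℝ × ℝ → ℝ × ℝ := fun p => (1/p.1, 1/p.2)

noncomputable def T₀₄ : ℝ × ℝ → ℝ × ℝ := fun p => ((p.1*p.2+p.1+1)/p.2, p.1*p.2+p.1)

theorem stmt16 (α β : ℝ) (hα : α > 0) (hβ : β > 0) :
    S₀₄ (S₀₄ (α, β)) = (α, β) ∧
    (S₀₄ ∘ T₀₄) ((S₀₄ ∘ T₀₄) ((S₀₄ ∘ T₀₄) (α, β))) = (α, β) := by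
  have hα' := hα.ne'
  have hβ' := hβ.ne'
  have h1 : α*β+α > 0 := by positivity
  have h2 : α*β+α+1 > 0 := by positivity
  constructor
  · simp [S₀₄, one_div_one_div]
  · simp only [S₀₄, T₀₄, Function.comp]
    field_simp
    rw [Prod.mk.injEq]
    constructor <;> (rw [div_eq_iff (by positivity)]; ring)
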